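/- For integers t, v ≥ 2, the quantity c_{t,v} = ∏_{i=0}^{t−1} (v^t − v^i)/(v^t − 1) satisfies c_{t,v} ≥ 1 − (v+1)/v^2. -/

import Mathlib

lemma prod_one_sub_pow_aux (x : ℝ) (hx0 : 0 ≤ x) (hx1 : x ≤ 1) :
    ∀ t : ℕ, 1 ≤ t →
      1 - x - x ^ 2 + x ^ (t + 1) ≤ ∏ k ∈ Finset.range t, (1 - x ^ (k + 1)) := by
  intro t
  induction t with
  | zero => intro h; omega
  | succ n ih =>
    intro _
    rcases Nat.eq_zero_or_pos n with hn | hn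
    · subst hn
      norm_num [Finset.prod_range_one]
    · have h1 := ih hn
      have hxn1 : x ^ (n + 1) ≤ 1 := pow_le_one₀ hx0 hx1
      have h2 : (0:ℝ) ≤ 1 - x ^ (n + 1) := by linarith
      rw [Finset.prod_range_succ]
      have step : 1 - x - x ^ 2 + x ^ (n + 1 + 1) ≤
          (1 - x - x ^ 2 + x ^ (n + 1)) * (1 - x ^ (n + 1)) := by
        have e1 : x ^ (n + 1) * x = x ^ (n + 2) := by ring
        have e2 : x ^ (n + 1) * x ^ 2 = x ^ (n + 3) := by ring
        have e3 : x ^ (n + 1) * x ^ (n + 1) = x ^ (2 * n + 2) := by ring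
        have e4 : x ^ (2 * n + 2) ≤ x ^ (n + 3) :=
          pow_le_pow_of_le_one hx0 hx1 (by omega)
        nlinarith
      calc 1 - x - x ^ 2 + x ^ (n + 1 + 1)
          ≤ (1 - x - x ^ 2 + x ^ (n + 1)) * (1 - x ^ (n + 1)) := step
        _ ≤ (∏ k ∈ Finset.range n, (1 - x ^ (k + 1))) * (1 - x ^ (n + 1)) :=
            mul_le_mul_of_nonneg_right h1 h2

/-- For integers `t, v ≥ 2`, the constant `c_{t,v} = ∏_{i=0}^{t-1} (v^t - v^i)/(v^t - 1)`
satisfies `c_{t,v} ≥ 1 - (v+1)/v²`. -/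
theorem c_tv_lower_bound (t v : ℕ) (ht : 2 ≤ t) (hv : 2 ≤ v) :
    (1 : ℝ) - ((v : ℝ) + 1) / (v : ℝ) ^ 2 ≤
      ∏ i ∈ Finset.range t, ((v : ℝ) ^ t - (v : ℝ) ^ i) / ((v : ℝ) ^ t - 1) := by
  have hv2 : (2:ℝ) ≤ (v:ℝ) := by exact_mod_cast hv
  have hvpos : (0:ℝ) < (v:ℝ) := by linarith
  have hv1 : (1:ℝ) ≤ (v:ℝ) := by linarith
  set x : ℝ := (v:ℝ)⁻¹ with hxdef
  have hx0 : 0 ≤ x := by positivity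
  have hx1 : x ≤ 1 := by
    rw [hxdef]
    rw [inv_le_one_iff₀]; right; linarith
  have hvt1 : (1:ℝ) < (v:ℝ) ^ t := by
    have := one_lt_pow₀ (show (1:ℝ) < v by linarith) (show t ≠ 0 by omega)
    linarith
  -- Step 1: each factor is ≥ 1 - x^(t-i)
  have hfac : ∀ i ∈ Finset.range t,
      1 - x ^ (t - i) ≤ ((v : ℝ) ^ t - (v : ℝ) ^ i) / ((v : ℝ) ^ t - 1) := by
    intro i hi
    rw [Finset.mem_range] at hi
    have hit : i ≤ t := hi.le
    have hnum : (0:ℝ) ≤ (v:ℝ) ^ t - (v:ℝ) ^ i := by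
      have := pow_le_pow_right₀ hv1 hit
      linarith
    have hsplit : (v:ℝ) ^ t = (v:ℝ) ^ i * (v:ℝ) ^ (t - i) := by
      rw [← pow_add]; congr 1; omega
    have hxe : x ^ (t - i) = (v:ℝ) ^ i / (v:ℝ) ^ t := by
      rw [hxdef, inv_pow, hsplit, eq_div_iff (by positivity)]
      field_simp
    have h1 : 1 - x ^ (t - i) = ((v:ℝ) ^ t - (v:ℝ) ^ i) / (v:ℝ) ^ t := by
      rw [hxe]
      field_simp
    rw [h1]
    apply div_le_div_of_nonneg_left hnum (by linarith)
    linarith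
  have hnn : ∀ i ∈ Finset.range t, (0:ℝ) ≤ 1 - x ^ (t - i) := by
    intro i _
    have : x ^ (t - i) ≤ 1 := pow_le_one₀ hx0 hx1
    linarith
  have step1 : ∏ i ∈ Finset.range t, (1 - x ^ (t - i)) ≤
      ∏ i ∈ Finset.range t, ((v : ℝ) ^ t - (v : ℝ) ^ i) / ((v : ℝ) ^ t - 1) :=
    Finset.prod_le_prod hnn hfac
  -- Step 2: reindex
  have hre : ∏ i ∈ Finset.range t, (1 - x ^ (t - i)) =
      ∏ k ∈ Finset.range t, (1 - x ^ (k + 1)) := by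
    rw [← Finset.prod_range_reflect (fun k => 1 - x ^ (k + 1)) t]
    apply Finset.prod_congr rfl
    intro i hi
    rw [Finset.mem_range] at hi
    congr 2
    omega
  -- Step 3: lower bound via aux lemma
  have step3 := prod_one_sub_pow_aux x hx0 hx1 t (by omega)
  have hxsum : ((v : ℝ) + 1) / (v : ℝ) ^ 2 = x + x ^ 2 := by
    rw [hxdef]
    field_simp
  have hxtp : 0 ≤ x ^ (t + 1) := by positivity
  rw [hxsum]
  calc (1:ℝ) - (x + x ^ 2) ≤ 1 - x - x ^ 2 + x ^ (t + 1) := by linarith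
    _ ≤ ∏ k ∈ Finset.range t, (1 - x ^ (k + 1)) := step3
    _ = ∏ i ∈ Finset.range t, (1 - x ^ (t - i)) := hre.symm
    _ ≤ _ := step1
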